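/- Let r : E → ℝ be γ-strongly convex on Ω with λ + γ > 0. For a tuple Z = (ξ_1, …, ξ_n) ∈ Ξⁿ define the empirical loss Ĝ_Z(w) = (1/n)Σ_{i=1}^n ℓ(ξ_i, w), the regularized empirical objective F̂_Z(w) = Ĝ_Z(w) + r(w), and let ŵ_Z ∈ Ω be the unique minimizer of F̂_Z over Ω; write G(w) = ∫ ℓ(ξ, w) dμ(ξ) for the population loss. Then, with Z distributed according to the product measure μ^⊗n on Ξⁿ, |E_Z[G(ŵ_Z) − Ĝ_Z(ŵ_Z)]| ≤ 4L²/((λ + γ)n). -/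

import Mathlib

open MeasureTheory Set Filter Topology

/-- Stability of regularized ERM: with `ℓ(ξ,·)` convex, `λ`-strongly convex
and `L`-Lipschitz on `Ω`, regularizer `r` `γ`-strongly convex on `Ω` with `λ + γ > 0`, and
`ŵ_Z` the minimizer over `Ω` of `F̂_Z = Ĝ_Z + r` for a sample `Z ∼ μ^⊗n`, one has
`|E_Z[G(ŵ_Z) - Ĝ_Z(ŵ_Z)]| ≤ 4L²/((λ+γ)n)` where `G` is the population loss. -/

-- min gap from strong convexity (midpoint argument)
lemma my_min_gap {E : Type*} [NormedAddCommGroup E] [InnerProductSpace ℝ E]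
    {Ω : Set E} {σ : ℝ} {F : E → ℝ} (hF : StrongConvexOn Ω σ F)
    {u v : E} (hu : u ∈ Ω) (hv : v ∈ Ω) (hmin : ∀ w ∈ Ω, F u ≤ F w) :
    σ / 4 * ‖u - v‖ ^ 2 ≤ F v - F u := by
  have hm : (1/2 : ℝ) • u + (1/2 : ℝ) • v ∈ Ω :=
    hF.1 hu hv (by norm_num) (by norm_num) (by norm_num)
  have h1 := hF.2 hu hv (by norm_num : (0:ℝ) ≤ 1/2) (by norm_num : (0:ℝ) ≤ 1/2) (by norm_num)
  have h2 := hmin _ hm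
  simp only [smul_eq_mul] at h1
  nlinarith [h1, h2]

-- strong convexity of the regularized empirical objective
lemma my_scvx {E : Type*} [NormedAddCommGroup E] [InnerProductSpace ℝ E]
    {Ω : Set E} (hconv : Convex ℝ Ω) {Ξ : Type*} (l : Ξ → E → ℝ) {lam γ : ℝ}
    (hscl : ∀ ξ, StrongConvexOn Ω lam (l ξ)) {r : E → ℝ} (hr : StrongConvexOn Ω γ r)
    {n : ℕ} (hn : 1 ≤ n) (Z : Fin n → Ξ) :
    StrongConvexOn Ω (lam + γ) (fun w => (1 / (n : ℝ)) * ∑ i, l (Z i) w + r w) := by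
  have hn0 : (0:ℝ) < n := by exact_mod_cast Nat.lt_of_lt_of_le Nat.zero_lt_one hn
  refine ⟨hconv, fun x hx y hy a b ha hb hab => ?_⟩
  have hsum : ∑ i, l (Z i) (a • x + b • y)
      ≤ ∑ i : Fin n, (a * l (Z i) x + b * l (Z i) y - a * b * (lam / 2 * ‖x - y‖ ^ 2)) := by
    refine Finset.sum_le_sum fun i _ => ?_
    have := (hscl (Z i)).2 hx hy ha hb hab
    simpa [smul_eq_mul] using this
  have hrr := hr.2 hx hy ha hb hab
  simp only [smul_eq_mul] at hrr ⊢
  have hsum2 : ∑ i : Fin n, (a * l (Z i) x + b * l (Z i) y - a * b * (lam / 2 * ‖x - y‖ ^ 2))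
      = a * ∑ i, l (Z i) x + b * ∑ i, l (Z i) y - n * (a * b * (lam / 2 * ‖x - y‖ ^ 2)) := by
    rw [Finset.sum_sub_distrib, Finset.sum_add_distrib, ← Finset.mul_sum, ← Finset.mul_sum]
    simp [Finset.card_univ]
  have h3 : (1 / (n:ℝ)) * ∑ i, l (Z i) (a • x + b • y)
      ≤ (1 / (n:ℝ)) * (a * ∑ i, l (Z i) x + b * ∑ i, l (Z i) y
          - n * (a * b * (lam / 2 * ‖x - y‖ ^ 2))) := by
    rw [← hsum2]
    exact mul_le_mul_of_nonneg_left hsum (by positivity)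
  have hne : (n:ℝ) ≠ 0 := ne_of_gt hn0
  have h4 : (1 / (n:ℝ)) * (a * ∑ i, l (Z i) x + b * ∑ i, l (Z i) y
          - n * (a * b * (lam / 2 * ‖x - y‖ ^ 2)))
      = a * ((1 / (n:ℝ)) * ∑ i, l (Z i) x) + b * ((1 / (n:ℝ)) * ∑ i, l (Z i) y)
          - a * b * (lam / 2 * ‖x - y‖ ^ 2) := by
    field_simp
  rw [h4] at h3
  have goal : (1 / (n:ℝ)) * ∑ i, l (Z i) (a • x + b • y) + r (a • x + b • y)
      ≤ a * ((1 / (n:ℝ)) * ∑ i, l (Z i) x + r x) + b * ((1 / (n:ℝ)) * ∑ i, l (Z i) y + r y)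
        - a * b * ((lam + γ) / 2 * ‖x - y‖ ^ 2) := by nlinarith [h3, hrr]
  exact goal

lemma my_stab {E : Type*} [NormedAddCommGroup E] [InnerProductSpace ℝ E]
    {Ω : Set E} (hconv : Convex ℝ Ω) {Ξ : Type*} (l : Ξ → E → ℝ) {lam L γ : ℝ}
    (hL : 0 < L) (hlg : 0 < lam + γ)
    (hlip : ∀ ξ, ∀ w ∈ Ω, ∀ w' ∈ Ω, |l ξ w - l ξ w'| ≤ L * ‖w - w'‖)
    (hscl : ∀ ξ, StrongConvexOn Ω lam (l ξ))
    {r : E → ℝ} (hr : StrongConvexOn Ω γ r)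
    {n : ℕ} (hn : 1 ≤ n)
    (what : (Fin n → Ξ) → E) (hmem : ∀ Z, what Z ∈ Ω)
    (hmin : ∀ Z, IsMinOn (fun w => (1 / (n : ℝ)) * ∑ i, l (Z i) w + r w) Ω (what Z))
    (Z Z' : Fin n → Ξ) (D : Finset (Fin n)) (hD : ∀ i, i ∉ D → Z i = Z' i) :
    ‖what Z - what Z'‖ ≤ 4 * L * D.card / ((lam + γ) * n) := by
  have hn0 : (0:ℝ) < n := by exact_mod_cast Nat.lt_of_lt_of_le Nat.zero_lt_one hn
  set u := what Z with hu
  set v := what Z' with hv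
  set d := ‖u - v‖ with hd
  have hd0 : 0 ≤ d := norm_nonneg _
  have g1 := my_min_gap (my_scvx hconv l hscl hr hn Z) (hmem Z) (hmem Z')
    (fun w hw => isMinOn_iff.mp (hmin Z) w hw)
  have g2 := my_min_gap (my_scvx hconv l hscl hr hn Z') (hmem Z') (hmem Z)
    (fun w hw => isMinOn_iff.mp (hmin Z') w hw)
  rw [show ‖v - u‖ = d by rw [hd, norm_sub_rev]] at g2
  -- sum bound
  have hterm : ∀ i : Fin n, (l (Z i) v - l (Z i) u) + (l (Z' i) u - l (Z' i) v) ≤ 2 * L * d := by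
    intro i
    have h1 := abs_le.mp (hlip (Z i) v (hmem Z') u (hmem Z))
    have h2 := abs_le.mp (hlip (Z' i) u (hmem Z) v (hmem Z'))
    have e1 : ‖v - u‖ = d := by rw [hd, norm_sub_rev]
    rw [e1] at h1
    have e2 : ‖u - v‖ = d := rfl
    rw [e2] at h2
    linarith [h1.2, h2.2]
  have hzero : ∀ i ∈ Finset.univ, i ∉ D →
      (l (Z i) v - l (Z i) u) + (l (Z' i) u - l (Z' i) v) = 0 := by
    intro i _ hi; rw [hD i hi]; ring
  have hsum : ∑ i, ((l (Z i) v - l (Z i) u) + (l (Z' i) u - l (Z' i) v))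
      ≤ (D.card : ℝ) * (2 * L * d) := by
    rw [← Finset.sum_subset (Finset.subset_univ D) hzero]
    calc ∑ i ∈ D, ((l (Z i) v - l (Z i) u) + (l (Z' i) u - l (Z' i) v))
        ≤ ∑ _i ∈ D, 2 * L * d := Finset.sum_le_sum fun i _ => hterm i
      _ = (D.card : ℝ) * (2 * L * d) := by rw [Finset.sum_const, nsmul_eq_mul]
  -- combine
  have hcomb : (lam + γ) / 2 * d ^ 2 ≤ (1 / (n:ℝ)) *
      ∑ i, ((l (Z i) v - l (Z i) u) + (l (Z' i) u - l (Z' i) v)) := by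
    have e : (1 / (n:ℝ)) * ∑ i, ((l (Z i) v - l (Z i) u) + (l (Z' i) u - l (Z' i) v))
        = ((1 / (n:ℝ)) * ∑ i, l (Z i) v + r v - ((1 / (n:ℝ)) * ∑ i, l (Z i) u + r u))
          + ((1 / (n:ℝ)) * ∑ i, l (Z' i) u + r u - ((1 / (n:ℝ)) * ∑ i, l (Z' i) v + r v)) := by
      rw [Finset.sum_add_distrib, Finset.sum_sub_distrib, Finset.sum_sub_distrib]
      ring
    rw [e]
    linarith [g1, g2]
  have hfin : (lam + γ) / 2 * d ^ 2 ≤ (1 / (n:ℝ)) * ((D.card : ℝ) * (2 * L * d)) := by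
    refine hcomb.trans (mul_le_mul_of_nonneg_left hsum (by positivity))
  rw [le_div_iff₀ (by positivity)]
  rcases eq_or_lt_of_le hd0 with h0 | h0
  · rw [← h0, zero_mul]; positivity
  · have hkey : (lam + γ) / 2 * d ^ 2 * n ≤ (D.card : ℝ) * (2 * L * d) := by
      have := mul_le_mul_of_nonneg_right hfin (le_of_lt hn0)
      calc (lam + γ) / 2 * d ^ 2 * (n:ℝ) ≤ (1 / (n:ℝ)) * ((D.card : ℝ) * (2 * L * d)) * n := this
        _ = (D.card : ℝ) * (2 * L * d) := by field_simp
    nlinarith [hkey, h0]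


noncomputable def mySwapE (Ξ : Type*) [MeasurableSpace Ξ] (n : ℕ) (i : Fin n) :
    ((Fin n → Ξ) × Ξ) ≃ᵐ ((Fin n → Ξ) × Ξ) :=
  (MeasurableEquiv.prodComm : ((Fin n → Ξ) × Ξ) ≃ᵐ (Ξ × (Fin n → Ξ))).trans <|
    (MeasurableEquiv.piFinSuccAbove (fun _ : Fin (n+1) => Ξ) (Fin.last n)).symm.trans <|
      (MeasurableEquiv.arrowCongr' (Equiv.swap (Fin.castSucc i) (Fin.last n))
          (MeasurableEquiv.refl Ξ)).trans <|
        (MeasurableEquiv.piFinSuccAbove (fun _ : Fin (n+1) => Ξ) (Fin.last n)).trans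
          (MeasurableEquiv.prodComm : (Ξ × (Fin n → Ξ)) ≃ᵐ ((Fin n → Ξ) × Ξ))

lemma mySwapE_apply {Ξ : Type*} [MeasurableSpace Ξ] {n : ℕ} (i : Fin n) (Z : Fin n → Ξ) (s : Ξ) :
    mySwapE Ξ n i (Z, s) = (Function.update Z i s, Z i) := by
  classical
  simp only [mySwapE, MeasurableEquiv.trans_apply, MeasurableEquiv.piFinSuccAbove_symm_apply,
    MeasurableEquiv.piFinSuccAbove_apply, MeasurableEquiv.arrowCongr',
    MeasurableEquiv.prodComm, MeasurableEquiv.coe_mk, Equiv.prodComm_apply, Prod.swap,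
    Fin.insertNthEquiv, Equiv.coe_fn_mk, Equiv.coe_fn_symm_mk, Equiv.arrowCongr'_apply,
    Equiv.arrowCongr_apply, MeasurableEquiv.refl, Fin.insertNth_last']
  refine Prod.ext ?_ ?_
  · funext j
    simp only [Fin.removeNth, Equiv.arrowCongr'_apply, Equiv.arrowCongr_apply,
      MeasurableEquiv.coe_mk, Equiv.refl_apply, Function.comp_apply, Equiv.symm_swap,
      Fin.succAbove_last_apply]
    by_cases h : j = i
    · subst h
      rw [Equiv.swap_apply_left, Fin.snoc_last, Function.update_self]; rfl
    · rw [Equiv.swap_apply_of_ne_of_ne (by simpa [Fin.castSucc_inj] using h)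
        (Fin.castSucc_lt_last j).ne, Fin.snoc_castSucc, Function.update_of_ne h]; rfl
  · simp only [MeasurableEquiv.coe_mk, Equiv.refl_apply, Equiv.symm_swap,
      Equiv.swap_apply_right, Fin.snoc_castSucc]
    rfl

lemma mySwapE_mp {Ξ : Type*} [MeasurableSpace Ξ] (μ : Measure Ξ) [IsProbabilityMeasure μ]
    {n : ℕ} (i : Fin n) :
    MeasurePreserving (mySwapE Ξ n i)
      ((Measure.pi fun _ : Fin n => μ).prod μ) ((Measure.pi fun _ : Fin n => μ).prod μ) := by
  have m1 : MeasurePreserving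
      (MeasurableEquiv.prodComm : ((Fin n → Ξ) × Ξ) ≃ᵐ (Ξ × (Fin n → Ξ)))
      ((Measure.pi fun _ : Fin n => μ).prod μ) (μ.prod (Measure.pi fun _ : Fin n => μ)) :=
    Measure.measurePreserving_swap
  have m1' : MeasurePreserving
      (MeasurableEquiv.prodComm : (Ξ × (Fin n → Ξ)) ≃ᵐ ((Fin n → Ξ) × Ξ))
      (μ.prod (Measure.pi fun _ : Fin n => μ)) ((Measure.pi fun _ : Fin n => μ).prod μ) :=
    Measure.measurePreserving_swap
  have m2 : MeasurePreserving
      (MeasurableEquiv.piFinSuccAbove (fun _ : Fin (n+1) => Ξ) (Fin.last n))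
      (Measure.pi fun _ : Fin (n+1) => μ) (μ.prod (Measure.pi fun _ : Fin n => μ)) :=
    measurePreserving_piFinSuccAbove (fun _ => μ) (Fin.last n)
  have m2s : MeasurePreserving
      (MeasurableEquiv.piFinSuccAbove (fun _ : Fin (n+1) => Ξ) (Fin.last n)).symm
      (μ.prod (Measure.pi fun _ : Fin n => μ)) (Measure.pi fun _ : Fin (n+1) => μ) :=
    MeasurePreserving.symm _ m2
  have m3 : MeasurePreserving
      (MeasurableEquiv.arrowCongr' (Equiv.swap (Fin.castSucc i) (Fin.last n))
        (MeasurableEquiv.refl Ξ))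
      (Measure.pi fun _ : Fin (n+1) => μ) (Measure.pi fun _ : Fin (n+1) => μ) :=
    measurePreserving_arrowCongr' (fun _ => μ) (fun _ => μ) _ _ (fun _ => MeasurePreserving.id μ)
  exact m1'.comp (m2.comp (m3.comp (m2s.comp m1)))


lemma my_meas {E : Type*} [NormedAddCommGroup E] [InnerProductSpace ℝ E]
    {Ω : Set E} (hne : Ω.Nonempty) (hcl : IsClosed Ω)
    {Ξ : Type*} [MeasurableSpace Ξ] (μ : Measure Ξ) (l : Ξ → E → ℝ) {L : ℝ} (hL : 0 < L)
    (hlip : ∀ ξ, ∀ w ∈ Ω, ∀ w' ∈ Ω, |l ξ w - l ξ w'| ≤ L * ‖w - w'‖)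
    (hGm : ∀ w ∈ Ω, AEStronglyMeasurable (fun ξ => l ξ w) μ)
    {α : Type*} [MeasurableSpace α] {P : Measure α}
    {W : α → E} (hW : AEStronglyMeasurable W P) (hWΩ : ∀ a, W a ∈ Ω)
    {ψ : α → Ξ} (hψ : MeasurePreserving ψ P μ) :
    AEStronglyMeasurable (fun a => l (ψ a) (W a)) P := by
  classical
  rcases isEmpty_or_nonempty α with hα | hα
  · exact StronglyMeasurable.of_subsingleton_dom.aestronglyMeasurable
  borelize E
  obtain ⟨W', hW'sm, hWW'⟩ := hW
  obtain ⟨w₀, hw₀⟩ := hne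
  set W'' : α → E := fun a => if W' a ∈ Ω then W' a else w₀ with hW''def
  have hW''sm : StronglyMeasurable W'' := by
    exact StronglyMeasurable.ite (hW'sm.measurable hcl.measurableSet) hW'sm
      stronglyMeasurable_const
  have hΩ'' : ∀ a, W'' a ∈ Ω := by
    intro a; by_cases h : W' a ∈ Ω <;> simp [hW''def, h, hw₀]
  have hW''ae : W =ᵐ[P] W'' := by
    filter_upwards [hWW'] with a ha
    have h2 : W' a ∈ Ω := ha ▸ hWΩ a
    show W a = if W' a ∈ Ω then W' a else w₀
    rw [if_pos h2, ha]
  have hsep : TopologicalSpace.IsSeparable (Set.range W'') := hW''sm.isSeparable_range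
  obtain ⟨C, hCsub, hCc, hCd⟩ := hsep.exists_countable_dense_subset
  have hCne : C.Nonempty := by
    rcases Set.eq_empty_or_nonempty C with h | h
    · exfalso
      have : W'' (Classical.arbitrary α) ∈ closure C := hCd (Set.mem_range_self _)
      rw [h] at this; simp at this
    · exact h
  obtain ⟨c, hc⟩ := hCc.exists_eq_range hCne
  have hcΩ : ∀ j, c j ∈ Ω := by
    intro j
    have : c j ∈ C := hc ▸ Set.mem_range_self j
    obtain ⟨a, ha⟩ := hCsub this
    exact ha ▸ hΩ'' a
  -- the approximating functions
  set g : ℕ → α → ℝ := fun j a => l (ψ a) (c j) + L * ‖W'' a - c j‖ with hgdef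
  have hg : ∀ j, AEMeasurable (g j) P := by
    intro j
    have p1 : AEStronglyMeasurable ((fun ξ => l ξ (c j)) ∘ ψ) P :=
      (hGm (c j) (hcΩ j)).comp_measurePreserving hψ
    have p2 : StronglyMeasurable fun a => L * ‖W'' a - c j‖ :=
      ((hW''sm.sub stronglyMeasurable_const).norm).const_mul L
    exact (p1.aemeasurable.add p2.measurable.aemeasurable)
  set h : ℕ → α → ℝ := fun k => Nat.rec (g 0) (fun k hk a => min (hk a) (g (k+1) a)) k with hhdef
  have hh : ∀ k, AEMeasurable (h k) P := by
    intro k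
    induction k with
    | zero => exact hg 0
    | succ k ih => exact ih.min (hg (k+1))
  have hmono : ∀ a k, h (k+1) a ≤ h k a := fun a k => min_le_left _ _
  have hhg : ∀ k a, h k a ≤ g k a := by
    intro k a
    cases k with
    | zero => exact le_refl _
    | succ k => exact min_le_right _ _
  have hlow : ∀ k a, l (ψ a) (W'' a) ≤ h k a := by
    intro k a
    have base : ∀ j, l (ψ a) (W'' a) ≤ g j a := by
      intro j
      have := (abs_le.mp (hlip (ψ a) (W'' a) (hΩ'' a) (c j) (hcΩ j))).2
      simp only [hgdef]; linarith
    induction k with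
    | zero => exact base 0
    | succ k ih => exact le_min ih (base (k+1))
  -- pointwise convergence
  have hconv : ∀ a, Tendsto (fun k => h k a) atTop (𝓝 (l (ψ a) (W'' a))) := by
    intro a
    rw [Metric.tendsto_atTop]
    intro ε hε
    have hmem : W'' a ∈ closure C := hCd (Set.mem_range_self a)
    rw [Metric.mem_closure_iff] at hmem
    obtain ⟨b, hbC, hb⟩ := hmem (ε / (2 * L)) (by positivity)
    obtain ⟨j, rfl⟩ := by rw [hc] at hbC; exact hbC
    refine ⟨j, fun k hk => ?_⟩
    have hanti : ∀ k' k'', k' ≤ k'' → h k'' a ≤ h k' a := by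
      intro k' k'' hle
      induction hle with
      | refl => exact le_refl _
      | step _ ih => exact le_trans (hmono a _) ih
    have h1 : h k a ≤ g j a := le_trans (hanti j k hk) (hhg j a)
    have h2 : g j a < l (ψ a) (W'' a) + ε := by
      have hd : ‖W'' a - c j‖ < ε / (2 * L) := by
        rw [← dist_eq_norm]; exact hb
      have := (abs_le.mp (hlip (ψ a) (c j) (hcΩ j) (W'' a) (hΩ'' a))).2
      rw [norm_sub_rev (c j)] at this
      have hL' : L * ‖W'' a - c j‖ < ε / 2 := by
        have h5 := mul_lt_mul_of_pos_left hd hL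
        calc L * ‖W'' a - c j‖ < L * (ε / (2 * L)) := h5
          _ = ε / 2 := by field_simp
      simp only [hgdef]
      nlinarith [hL']
    have h3 := hlow k a
    rw [Real.dist_eq, abs_lt]
    constructor <;> nlinarith [h1, h2, h3, hε]
  have hAE : AEMeasurable (fun a => l (ψ a) (W'' a)) P :=
    aemeasurable_of_tendsto_metrizable_ae atTop hh (Eventually.of_forall hconv)
  refine hAE.aestronglyMeasurable.congr ?_
  filter_upwards [hW''ae] with a ha
  rw [ha]



theorem stmt_3 {E : Type*} [NormedAddCommGroup E] [InnerProductSpace ℝ E]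
    {Ω : Set E} (hne : Ω.Nonempty) (hcl : IsClosed Ω) (hconv : Convex ℝ Ω)
    {Ξ : Type*} [MeasurableSpace Ξ] (μ : Measure Ξ) [IsProbabilityMeasure μ]
    (l : Ξ → E → ℝ) {lam L γ : ℝ} (hlam : 0 ≤ lam) (hL : 0 < L) (hlg : 0 < lam + γ)
    (hconvl : ∀ ξ, ConvexOn ℝ Ω (l ξ))
    (hscl : ∀ ξ, StrongConvexOn Ω lam (l ξ))
    (hlip : ∀ ξ, ∀ w ∈ Ω, ∀ w' ∈ Ω, |l ξ w - l ξ w'| ≤ L * ‖w - w'‖)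
    (r : E → ℝ) (hr : StrongConvexOn Ω γ r)
    {n : ℕ} (hn : 1 ≤ n)
    (G : E → ℝ) (hG : ∀ w, G w = ∫ ξ, l ξ w ∂μ)
    (hGint : ∀ w ∈ Ω, Integrable (fun ξ => l ξ w) μ)
    (what : (Fin n → Ξ) → E)
    (hmem : ∀ Z, what Z ∈ Ω)
    (hmin : ∀ Z, IsMinOn (fun w => (1 / (n : ℝ)) * ∑ i, l (Z i) w + r w) Ω (what Z))
    (hmeas : AEStronglyMeasurable what (Measure.pi fun _ : Fin n => μ))
    (hint1 : Integrable (fun Z => G (what Z)) (Measure.pi fun _ : Fin n => μ))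
    (hint2 : Integrable (fun Z => (1 / (n : ℝ)) * ∑ i, l (Z i) (what Z))
      (Measure.pi fun _ : Fin n => μ)) :
    |∫ Z, (G (what Z) - (1 / (n : ℝ)) * ∑ i, l (Z i) (what Z))
        ∂(Measure.pi fun _ : Fin n => μ)| ≤ 4 * L ^ 2 / ((lam + γ) * n) := by
  classical
  have hn0 : (0:ℝ) < n := by exact_mod_cast Nat.lt_of_lt_of_le Nat.zero_lt_one hn
  have hΞ : Nonempty Ξ := by
    by_contra h
    rw [not_nonempty_iff] at h
    have h0 : μ Set.univ = 1 := measure_univ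
    rw [Set.univ_eq_empty_iff.2 h, measure_empty] at h0
    exact zero_ne_one h0
  set π : Measure (Fin n → Ξ) := Measure.pi fun _ : Fin n => μ with hπ
  set P : Measure ((Fin n → Ξ) × Ξ) := π.prod μ with hP
  have Z₀ : Fin n → Ξ := fun _ => Classical.arbitrary Ξ
  set w₀ : E := what Z₀ with hw₀
  -- stability bounds
  have hstab1 : ∀ (Z : Fin n → Ξ) (i : Fin n) (s : Ξ),
      ‖what Z - what (Function.update Z i s)‖ ≤ 4 * L / ((lam + γ) * n) := by
    intro Z i s
    have := my_stab hconv l hL hlg hlip hscl hr hn what hmem hmin Z (Function.update Z i s)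
      {i} (fun j hj => (Function.update_of_ne (by simpa using hj) s Z).symm)
    simpa using this
  have hstab2 : ∀ (Z Z' : Fin n → Ξ), ‖what Z - what Z'‖ ≤ 4 * L / (lam + γ) := by
    intro Z Z'
    have := my_stab hconv l hL hlg hlip hscl hr hn what hmem hmin Z Z'
      Finset.univ (fun j hj => absurd (Finset.mem_univ j) hj)
    have e : 4 * L * (Finset.univ : Finset (Fin n)).card / ((lam + γ) * n)
        = 4 * L / (lam + γ) := by
      rw [Finset.card_univ, Fintype.card_fin]
      field_simp
    rwa [e] at this
  have hGm : ∀ w ∈ Ω, AEStronglyMeasurable (fun ξ => l ξ w) μ :=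
    fun w hw => (hGint w hw).aestronglyMeasurable
  -- measure preserving maps
  have mp_fst : MeasurePreserving (Prod.fst : (Fin n → Ξ) × Ξ → (Fin n → Ξ)) P π :=
    ⟨measurable_fst, by rw [hP, Measure.map_fst_prod]; simp⟩
  have mp_snd : MeasurePreserving (Prod.snd : (Fin n → Ξ) × Ξ → Ξ) P μ :=
    ⟨measurable_snd, by rw [hP, Measure.map_snd_prod]; simp⟩
  have mpT : ∀ i : Fin n, MeasurePreserving (mySwapE Ξ n i) P P := fun i => mySwapE_mp μ i
  have mp_upd : ∀ i : Fin n,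
      MeasurePreserving (fun p : (Fin n → Ξ) × Ξ => Function.update p.1 i p.2) P π := by
    intro i
    have he : (Prod.fst ∘ (mySwapE Ξ n i)) =
        fun p : (Fin n → Ξ) × Ξ => Function.update p.1 i p.2 := by
      funext p
      cases p with
      | mk Z s => rw [Function.comp_apply, mySwapE_apply]
    exact he ▸ mp_fst.comp (mpT i)
  -- the two integrands on the product space
  set g : (Fin n → Ξ) × Ξ → ℝ := fun p => l p.2 (what p.1) with hg
  set Bf : Fin n → (Fin n → Ξ) × Ξ → ℝ :=
    fun i p => l p.2 (what (Function.update p.1 i p.2)) with hBf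
  have hg_meas : AEStronglyMeasurable g P :=
    my_meas hne hcl μ l hL hlip hGm (hmeas.comp_measurePreserving mp_fst)
      (fun p => hmem _) mp_snd
  have hB_meas : ∀ i, AEStronglyMeasurable (Bf i) P := fun i =>
    my_meas hne hcl μ l hL hlip hGm (hmeas.comp_measurePreserving (mp_upd i))
      (fun p => hmem _) mp_snd
  -- integrability
  have base : Integrable ((fun ξ => l ξ w₀) ∘ Prod.snd) P :=
    (mp_snd.integrable_comp (hGm w₀ (hmem Z₀))).2 (hGint w₀ (hmem Z₀))
  set M : ℝ := L * (4 * L / (lam + γ)) with hM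
  have hdom : Integrable (fun p : (Fin n → Ξ) × Ξ => |l p.2 w₀| + M) P :=
    base.abs.add (integrable_const M)
  have hg_int : Integrable g P := by
    refine Integrable.mono' hdom hg_meas (ae_of_all _ fun p => ?_)
    have h1 := (abs_le.mp (hlip p.2 (what p.1) (hmem _) w₀ (hmem Z₀))).2
    have h2 := hstab2 p.1 Z₀
    have h3 : L * ‖what p.1 - w₀‖ ≤ M := by
      rw [hM]; exact mul_le_mul_of_nonneg_left h2 hL.le
    have hlip' := hlip p.2 (what p.1) (hmem _) w₀ (hmem Z₀)
    rw [Real.norm_eq_abs]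
    calc |l p.2 (what p.1)| = |l p.2 w₀ + (l p.2 (what p.1) - l p.2 w₀)| := by ring_nf
      _ ≤ |l p.2 w₀| + |l p.2 (what p.1) - l p.2 w₀| := abs_add_le _ _
      _ ≤ |l p.2 w₀| + M := add_le_add le_rfl (hlip'.trans h3)
  have hB_int : ∀ i, Integrable (Bf i) P := by
    intro i
    refine Integrable.mono' hdom (hB_meas i) (ae_of_all _ fun p => ?_)
    have h2 := hstab2 (Function.update p.1 i p.2) Z₀
    have h3 : L * ‖what (Function.update p.1 i p.2) - w₀‖ ≤ M := by
      rw [hM]; exact mul_le_mul_of_nonneg_left h2 hL.le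
    have hlip' := hlip p.2 (what (Function.update p.1 i p.2)) (hmem _) w₀ (hmem Z₀)
    rw [Real.norm_eq_abs]
    calc |Bf i p| = |l p.2 w₀ + (l p.2 (what (Function.update p.1 i p.2)) - l p.2 w₀)| := by
          simp only [hBf]; ring_nf
      _ ≤ |l p.2 w₀| + |l p.2 (what (Function.update p.1 i p.2)) - l p.2 w₀| := abs_add_le _ _
      _ ≤ |l p.2 w₀| + M := add_le_add le_rfl (hlip'.trans h3)
  -- C_i = Bf i ∘ T_i
  have hCeq : ∀ i, (fun p : (Fin n → Ξ) × Ξ => Bf i (mySwapE Ξ n i p))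
      = fun p => l (p.1 i) (what p.1) := by
    intro i; funext p
    cases p with
    | mk Z s =>
      rw [mySwapE_apply]
      simp only [hBf]
      rw [Function.update_idem, Function.update_eq_self]
  have hC_int : ∀ i, Integrable (fun p : (Fin n → Ξ) × Ξ => l (p.1 i) (what p.1)) P := by
    intro i
    have h := ((mpT i).integrable_comp (hB_meas i)).2 (hB_int i)
    rw [Function.comp_def, hCeq i] at h
    exact h
  have hIC : ∀ i, ∫ p, l (p.1 i) (what p.1) ∂P = ∫ p, Bf i p ∂P := by
    intro i
    rw [← hCeq i]
    exact (mpT i).integral_comp' (Bf i)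
  have E1 : ∫ p, g p ∂P = ∫ Z, G (what Z) ∂π := by
    rw [hP, integral_prod g hg_int]
    exact integral_congr_ae (ae_of_all _ fun Z => (hG (what Z)).symm)
  have E2 : ∫ Z, (1 / (n:ℝ)) * ∑ i, l (Z i) (what Z) ∂π
      = (1 / (n:ℝ)) * ∑ i, ∫ p, Bf i p ∂P := by
    have hmap : ∫ Z, (1 / (n:ℝ)) * ∑ i, l (Z i) (what Z) ∂π
        = ∫ p : (Fin n → Ξ) × Ξ, (1 / (n:ℝ)) * ∑ i, l (p.1 i) (what p.1) ∂P := by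
      rw [← mp_fst.map_eq]
      exact integral_map measurable_fst.aemeasurable
        (by rw [mp_fst.map_eq]; exact hint2.aestronglyMeasurable)
    rw [hmap, integral_const_mul]
    congr 1
    rw [integral_finset_sum Finset.univ (fun i _ => hC_int i)]
    exact Finset.sum_congr rfl fun i _ => hIC i
  set Cb : ℝ := 4 * L ^ 2 / ((lam + γ) * n) with hCbdef
  have keyI : ∫ Z, (G (what Z) - (1 / (n:ℝ)) * ∑ i, l (Z i) (what Z)) ∂π
      = (1 / (n:ℝ)) * ∑ i, ∫ p, (g p - Bf i p) ∂P := by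
    rw [integral_sub hint1 hint2, ← E1, E2]
    have hsub : ∀ i : Fin n, ∫ p, (g p - Bf i p) ∂P = ∫ p, g p ∂P - ∫ p, Bf i p ∂P :=
      fun i => integral_sub hg_int (hB_int i)
    rw [Finset.sum_congr rfl (fun i _ => hsub i), Finset.sum_sub_distrib,
      Finset.sum_const, Finset.card_univ, Fintype.card_fin, nsmul_eq_mul]
    field_simp
  rw [keyI]
  have hCb0 : 0 ≤ Cb := by rw [hCbdef]; positivity
  have hbound : ∀ i, |∫ p, (g p - Bf i p) ∂P| ≤ Cb := by
    intro i
    rw [← Real.norm_eq_abs]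
    have hptw : ∀ p : (Fin n → Ξ) × Ξ, ‖g p - Bf i p‖ ≤ Cb := by
      intro p
      have h1 := (abs_le.mp (hlip p.2 (what p.1) (hmem _)
        (what (Function.update p.1 i p.2)) (hmem _)))
      have h2 := hstab1 p.1 i p.2
      have h3 : L * ‖what p.1 - what (Function.update p.1 i p.2)‖
          ≤ L * (4 * L / ((lam + γ) * n)) := mul_le_mul_of_nonneg_left h2 hL.le
      have he : L * (4 * L / ((lam + γ) * n)) = Cb := by rw [hCbdef]; ring
      rw [Real.norm_eq_abs]
      calc |g p - Bf i p| ≤ L * ‖what p.1 - what (Function.update p.1 i p.2)‖ := by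
            simp only [hg, hBf]
            exact abs_le.mpr h1 |>.trans (le_refl _) |> fun _ => (hlip p.2 (what p.1) (hmem _)
              (what (Function.update p.1 i p.2)) (hmem _))
        _ ≤ Cb := he ▸ h3
    have hb := norm_integral_le_of_norm_le_const (μ := P)
      (f := fun p => g p - Bf i p) (ae_of_all _ hptw)
    simpa [measure_univ] using hb
  have hfinal : |(1 / (n:ℝ)) * ∑ i, ∫ p, (g p - Bf i p) ∂P| ≤ (1 / (n:ℝ)) * ((n:ℝ) * Cb) := by
    rw [abs_mul, abs_of_pos (by positivity : (0:ℝ) < 1 / (n:ℝ))]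
    refine mul_le_mul_of_nonneg_left ?_ (by positivity)
    refine (Finset.abs_sum_le_sum_abs _ _).trans ?_
    refine (Finset.sum_le_sum fun i _ => hbound i).trans ?_
    rw [Finset.sum_const, Finset.card_univ, Fintype.card_fin, nsmul_eq_mul]
  refine hfinal.trans ?_
  rw [show (1 / (n:ℝ)) * ((n:ℝ) * Cb) = Cb from by field_simp]
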